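/- Let G be a group, M ≤ Z₄(G) an abelian normal subgroup, and δ : G → M a derivation with respect to the conjugation action (where [x,y] ∈ γ₂(G) acts on M by conjugation). For x, y ∈ G with δ(x) = a₁, δ(y) = a₂, one has δ([y,x]) = [a₂,x][y,a₁][y,x,a₂][y,x,a₁][y,x,[a₁,y]]. -/

import Mathlib

/-- Left-normed commutator with the convention `[g,h] = g⁻¹h⁻¹gh`. -/
def pc {G : Type*} [Group G] (g h : G) : G := g⁻¹ * h⁻¹ * g * h

private lemma key_comm {H : Type*} [CommGroup H] (p q r s t e1 e2 : H) :
    r⁻¹ * t⁻¹ * p * e1 =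
      e2⁻¹ * p * (q⁻¹ * e1) * (r⁻¹ * e2) * (s⁻¹ * e1) * (t⁻¹ * s * e1⁻¹ * q) := by
  apply Additive.ofMul.injective
  simp only [ofMul_mul, ofMul_inv]
  abel

/-- Let `G` be a group, `M ≤ Z₄(G)` an abelian normal subgroup, and
`δ : G → M` a derivation with respect to the conjugation action.  For `x, y ∈ G`
with `δ(x) = a₁`, `δ(y) = a₂`, one has
`δ([y,x]) = [a₂,x][y,a₁][y,x,a₂][y,x,a₁][y,x,[a₁,y]]`,
with left-normed commutators `[g,h] = g⁻¹h⁻¹gh`. -/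
theorem stmt17 {G : Type*} [Group G] (M : Subgroup G) (hnorm : M.Normal)
    (habel : ∀ a ∈ M, ∀ b ∈ M, a * b = b * a)
    (hM4 : M ≤ upperCentralSeries G 4)
    (δ : G → G) (hmem : ∀ g : G, δ g ∈ M)
    (hδ : ∀ g h : G, δ (g * h) = h⁻¹ * δ g * h * δ h)
    (x y : G) (a₁ a₂ : G) (ha₁ : a₁ = δ x) (ha₂ : a₂ = δ y) :
    δ (pc y x) =
      pc a₂ x * pc y a₁ * pc (pc y x) a₂ * pc (pc y x) a₁ *
        pc (pc y x) (pc a₁ y) := by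
  letI : CommGroup ↥M :=
    { (inferInstance : Group ↥M) with
      mul_comm := fun a b => Subtype.ext (habel a a.2 b b.2) }
  have hdx : δ x = a₁ := ha₁.symm
  have hdy : δ y = a₂ := ha₂.symm
  have ha1M : a₁ ∈ M := ha₁ ▸ hmem x
  have ha2M : a₂ ∈ M := ha₂ ▸ hmem y
  have hconj : ∀ a ∈ M, ∀ g : G, g⁻¹ * a * g ∈ M := by
    intro a ha g
    simpa [mul_assoc] using hnorm.conj_mem a ha g⁻¹
  have h1 : δ 1 = 1 := by
    have h := hδ 1 1
    simp only [mul_one, one_mul, inv_one] at h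
    exact left_eq_mul.mp h
  have hinv : ∀ g : G, δ g⁻¹ = g * (δ g)⁻¹ * g⁻¹ := by
    intro g
    have h := hδ g⁻¹ g
    rw [inv_mul_cancel, h1] at h
    calc δ g⁻¹ = g * (g⁻¹ * δ g⁻¹ * g * δ g) * (δ g)⁻¹ * g⁻¹ := by group
      _ = g * (1 : G) * (δ g)⁻¹ * g⁻¹ := by rw [← h]
      _ = g * (δ g)⁻¹ * g⁻¹ := by group
  have hL : δ (pc y x) =
      ((y⁻¹*x⁻¹*y*x)⁻¹ * a₂ * (y⁻¹*x⁻¹*y*x))⁻¹ *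
        ((y*(y⁻¹*x⁻¹*y*x))⁻¹ * a₁ * (y*(y⁻¹*x⁻¹*y*x)))⁻¹ * (x⁻¹ * a₂ * x) * a₁ := by
    rw [pc, hδ, hδ, hδ, hinv, hinv, hdx, hdy]
    group
  have hR : pc a₂ x * pc y a₁ * pc (pc y x) a₂ * pc (pc y x) a₁ *
        pc (pc y x) (pc a₁ y) =
      a₂⁻¹ * (x⁻¹ * a₂ * x) * ((y⁻¹ * a₁ * y)⁻¹ * a₁) *
        (((y⁻¹*x⁻¹*y*x)⁻¹ * a₂ * (y⁻¹*x⁻¹*y*x))⁻¹ * a₂) *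
        (((y⁻¹*x⁻¹*y*x)⁻¹ * a₁ * (y⁻¹*x⁻¹*y*x))⁻¹ * a₁) *
        (((y*(y⁻¹*x⁻¹*y*x))⁻¹ * a₁ * (y*(y⁻¹*x⁻¹*y*x)))⁻¹ *
          ((y⁻¹*x⁻¹*y*x)⁻¹ * a₁ * (y⁻¹*x⁻¹*y*x)) * a₁⁻¹ * (y⁻¹ * a₁ * y)) := by
    simp only [pc]
    group
  rw [hL, hR]
  have key := key_comm
    (⟨x⁻¹ * a₂ * x, hconj _ ha2M x⟩ : ↥M)
    (⟨y⁻¹ * a₁ * y, hconj _ ha1M y⟩ : ↥M)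
    (⟨(y⁻¹*x⁻¹*y*x)⁻¹ * a₂ * (y⁻¹*x⁻¹*y*x), hconj _ ha2M _⟩ : ↥M)
    (⟨(y⁻¹*x⁻¹*y*x)⁻¹ * a₁ * (y⁻¹*x⁻¹*y*x), hconj _ ha1M _⟩ : ↥M)
    (⟨(y*(y⁻¹*x⁻¹*y*x))⁻¹ * a₁ * (y*(y⁻¹*x⁻¹*y*x)), hconj _ ha1M _⟩ : ↥M)
    (⟨a₁, ha1M⟩ : ↥M) (⟨a₂, ha2M⟩ : ↥M)
  have key' := congrArg (Subtype.val) key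
  simpa only [Subgroup.coe_mul, InvMemClass.coe_inv, mul_assoc] using key'
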